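/- On a finite domain D with |D| = d, the number of join-reducible n-ary relations (relations expressible as a natural join of relations each on a proper non-empty subset of positions) is at most 2^{n·d^{n-1}}. Consequently, if d > n then the join-reducible relations form a proper subset of all n-ary relations, since 2^{n·d^{n-1}} < 2^{dⁿ}. -/

import Mathlib

/-- Restriction of an attributed tuple to a subset of attributes. -/
def restrictTo {σ D : Type*} (a : σ → D) (Λ : Set σ) : ↥Λ → D := fun x => a x

/-- Projection of an attributed relation to a subset of attributes. -/
def proj {σ D : Type*} (R : Set (σ → D)) (Λ : Set σ) : Set (↥Λ → D) :=
  (fun a => restrictTo a Λ) '' R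

/-- A relation is join reducible when it is a natural join over a cover by
non-empty proper subsets of attributes. -/
def JoinReducible {σ D : Type*} (R : Set (σ → D)) : Prop :=
  ∃ m, ∃ Λ : Fin m → Set σ, (⋃ i, Λ i = Set.univ) ∧
    (∀ i, (Λ i).Nonempty ∧ Λ i ≠ Set.univ) ∧
    ∃ Rs : ∀ i, Set (↥(Λ i) → D), R = {a | ∀ i, restrictTo a (Λ i) ∈ Rs i}

lemma joinRed_canon {σ D : Type*} (R : Set (σ → D)) (h : JoinReducible R) :
    R = {a | ∀ j : σ, restrictTo a ({j}ᶜ : Set σ) ∈ proj R ({j}ᶜ : Set σ)} := by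
  obtain ⟨m, Λ, -, hprop, Rs, hR⟩ := h
  ext a
  constructor
  · intro ha j
    exact ⟨a, ha, rfl⟩
  · intro ha
    rw [hR]
    intro i
    obtain ⟨j, hj⟩ : ∃ j, j ∉ Λ i := by
      by_contra hc
      push_neg at hc
      exact (hprop i).2 (Set.eq_univ_of_forall hc)
    obtain ⟨b, hbR, hb⟩ := ha j
    have hab : restrictTo a (Λ i) = restrictTo b (Λ i) := by
      funext x
      have hx : (x : σ) ∈ ({j}ᶜ : Set σ) := fun hmem => hj (by
        simpa using hmem ▸ x.2)
      have := congrFun hb ⟨x, hx⟩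
      exact this.symm
    rw [hab]
    rw [hR] at hbR
    exact hbR i


/-- There are at most `2 ^ (n * d ^ (n-1))` join reducible n-ary relations on
a domain of size `d`; for `d > n` this is less than the number `2 ^ (d ^ n)`
of all n-ary relations. -/
theorem stmt_11 {D : Type*} [Fintype D] (n : ℕ) (hn : 2 ≤ n) :
    Nat.card {R : Set (Fin n → D) // JoinReducible R} ≤
      2 ^ (n * Fintype.card D ^ (n - 1)) ∧
    (n < Fintype.card D →
      2 ^ (n * Fintype.card D ^ (n - 1)) < 2 ^ (Fintype.card D ^ n)) := by
  classical
  set d := Fintype.card D with hd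
  constructor
  · let F : {R : Set (Fin n → D) // JoinReducible R} →
        (∀ j : Fin n, Set (↥({j}ᶜ : Set (Fin n)) → D)) :=
      fun R j => proj R.1 ({j}ᶜ : Set (Fin n))
    have hinj : Function.Injective F := by
      intro R S hFS
      ext1
      rw [joinRed_canon R.1 R.2, joinRed_canon S.1 S.2]
      ext a
      simp only [Set.mem_setOf_eq]
      have e : ∀ j, proj R.1 ({j}ᶜ : Set (Fin n)) = proj S.1 ({j}ᶜ : Set (Fin n)) :=
        fun j => congrFun hFS j
      constructor <;> intro h j
      · rw [← e j]; exact h j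
      · rw [e j]; exact h j
    calc Nat.card {R : Set (Fin n → D) // JoinReducible R}
        ≤ Nat.card (∀ j : Fin n, Set (↥({j}ᶜ : Set (Fin n)) → D)) :=
          Nat.card_le_card_of_injective F hinj
      _ = ∏ j : Fin n, Nat.card (Set (↥({j}ᶜ : Set (Fin n)) → D)) := Nat.card_pi
      _ = ∏ j : Fin n, 2 ^ (d ^ (n - 1)) := by
          refine Finset.prod_congr rfl fun j _ => ?_
          have h1 : Nat.card (↥({j}ᶜ : Set (Fin n))) = n - 1 := by
            rw [Nat.card_eq_fintype_card, Fintype.card_compl_set]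
            simp
          rw [Nat.card_eq_fintype_card, Fintype.card_set, Fintype.card_fun]
          rw [← Nat.card_eq_fintype_card (α := ↥({j}ᶜ : Set (Fin n))), h1, hd]
      _ = 2 ^ (n * d ^ (n - 1)) := by
          rw [Finset.prod_const, Finset.card_univ, Fintype.card_fin, ← pow_mul,
            mul_comm]
  · intro hdn
    apply Nat.pow_lt_pow_right one_lt_two
    have hd1 : 1 ≤ d := by omega
    calc n * d ^ (n - 1) < d * d ^ (n - 1) := by
          have : 0 < d ^ (n-1) := Nat.pow_pos (by omega)
          exact (Nat.mul_lt_mul_right this).mpr hdn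
      _ = d ^ n := by
          rw [← pow_succ']
          congr 1
          omega
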